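/- arXiv:2304.07252 — 2 statements merged into one kernel-verified Lean document; each statement's English description precedes it below -/
import Mathlib

section
/- For a,b in L^∞(T), the operator norm of the paired operator S_{a,b} satisfies max(‖a‖_∞, ‖b‖_∞) ≤ ‖S_{a,b}‖ ≤ √2 · max(‖a‖_∞, ‖b‖_∞). -/
open MeasureTheory Complex Real AddCircle
open scoped ENNReal ComplexConjugate

noncomputable section

instance : Fact (0 < 2 * π) := ⟨by positivity⟩

/-- Normalized Haar (Lebesgue) measure on the unit circle, realized as `AddCircle (2π)`. -/
abbrev μT : Measure (AddCircle (2 * π)) := AddCircle.haarAddCircle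

/-- The Lebesgue space `L²(𝕋)`. -/
abbrev L2 : Type := Lp ℂ 2 μT

/-- The space `L^∞(𝕋)`. -/
abbrev Linf : Type := Lp ℂ ∞ μT

/-- Multiplication of an `L²` function by an `L^∞` function, as an element of `L²`. -/
def mul2 (a : Linf) (f : L2) : L2 :=
  ((Lp.memLp f).smul (p := ∞) (Lp.memLp a)).toLp ((a : AddCircle (2 * π) → ℂ) • (f : AddCircle (2 * π) → ℂ))

lemma mul2_coe (a : Linf) (f : L2) :
    (mul2 a f : AddCircle (2 * π) → ℂ) =ᵐ[μT] fun x => a x * f x :=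
  (MemLp.coeFn_toLp _)

/-- Multiplication in `L^∞`. -/
def mulInf (a b : Linf) : Linf :=
  ((Lp.memLp b).smul (p := ∞) (Lp.memLp a)).toLp ((a : AddCircle (2 * π) → ℂ) • (b : AddCircle (2 * π) → ℂ))

lemma mulInf_coe (a b : Linf) :
    (mulInf a b : AddCircle (2 * π) → ℂ) =ᵐ[μT] fun x => a x * b x :=
  (MemLp.coeFn_toLp _)

/-- Complex conjugation on `Lp`. -/
def conjLp {p : ℝ≥0∞} [Fact (1 ≤ p)] (f : Lp ℂ p μT) : Lp ℂ p μT :=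
  MemLp.toLp (fun x => conj (f x))
    ⟨continuous_star.comp_aestronglyMeasurable (Lp.aestronglyMeasurable f),
      by
        rw [eLpNorm_congr_norm_ae (g := (f : AddCircle (2 * π) → ℂ))
          (Filter.Eventually.of_forall fun x => by simp)]
        exact (Lp.memLp f).2⟩

lemma conjLp_coe {p : ℝ≥0∞} [Fact (1 ≤ p)] (f : Lp ℂ p μT) :
    (conjLp f : AddCircle (2 * π) → ℂ) =ᵐ[μT] fun x => conj (f x) :=
  (MemLp.coeFn_toLp _)

/-- The Hardy space `H²`, as the subspace of `L²(𝕋)` of functions whose negative Fourier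
coefficients vanish. -/
def Hardy : Submodule ℂ L2 where
  carrier := {f | ∀ n : ℤ, n < 0 → fourierBasis.repr f n = 0}
  add_mem' := fun hf hg n hn => by simp [hf n hn, hg n hn]
  zero_mem' := fun n hn => by simp
  smul_mem' := fun c f hf n hn => by simp [hf n hn]

lemma hardy_isClosed : IsClosed (Hardy : Set L2) := by
  have h : (Hardy : Set L2)
      = ⋂ n : ℤ, ⋂ _ : n < 0, {f : L2 | fourierBasis.repr f n = 0} := by
    ext f
    simp [Hardy, Set.mem_iInter]
  rw [h]
  refine isClosed_iInter fun n => isClosed_iInter fun hn => ?_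
  have hc : Continuous fun f : L2 => fourierBasis.repr f n := by
    have : (fun f : L2 => fourierBasis.repr f n)
        = fun f : L2 => (innerSL ℂ (fourierBasis n : L2)) f := by
      ext f
      rw [HilbertBasis.repr_apply_apply]
      rfl
    rw [this]
    exact (innerSL ℂ (fourierBasis n : L2)).continuous
  exact isClosed_eq hc continuous_const

instance : CompleteSpace Hardy := hardy_isClosed.completeSpace_coe

/-- The Riesz projection `P⁺ : L² → L²`, i.e. the orthogonal projection onto `H²`. -/
def Pplus : L2 →L[ℂ] L2 := Hardy.subtypeL.comp Hardy.orthogonalProjectionOnto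

/-- The complementary projection `P⁻ = I - P⁺`. -/
def Pminus : L2 →L[ℂ] L2 := ContinuousLinearMap.id ℂ L2 - Pplus

lemma mul2_norm_le (a : Linf) (f : L2) : ‖mul2 a f‖ ≤ ‖a‖ * ‖f‖ := by
  rw [mul2, Lp.norm_toLp]
  have h := eLpNorm_smul_le_eLpNorm_top_mul_eLpNorm 2
    (Lp.aestronglyMeasurable f) (φ := (a : AddCircle (2 * π) → ℂ))
  refine le_trans (ENNReal.toReal_mono ?_ h) ?_
  · exact ENNReal.mul_ne_top (Lp.memLp a).2.ne (Lp.memLp f).2.ne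
  · rw [ENNReal.toReal_mul, Lp.norm_def, Lp.norm_def]

/-- Multiplication by an `L^∞` function `a`, as a bounded operator `M_a` on `L²`. -/
def Mult (a : Linf) : L2 →L[ℂ] L2 :=
  LinearMap.mkContinuous
    { toFun := mul2 a
      map_add' := fun f g => by
        refine Lp.ext ?_
        filter_upwards [mul2_coe a (f + g), mul2_coe a f, mul2_coe a g,
          Lp.coeFn_add f g, Lp.coeFn_add (mul2 a f) (mul2 a g)] with x h1 h2 h3 h4 h5
        simp only [h1, h5, Pi.add_apply, h2, h3, h4, mul_add]
      map_smul' := fun c f => by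
        refine Lp.ext ?_
        filter_upwards [mul2_coe a (c • f), mul2_coe a f,
          Lp.coeFn_smul c f, Lp.coeFn_smul c (mul2 a f)] with x h1 h2 h3 h4
        simp only [h1, h4, Pi.smul_apply, h2, h3, smul_eq_mul, RingHom.id_apply]
        ring }
    ‖a‖ (fun f => mul2_norm_le a f)

/-- The paired operator `S_{a,b} = a P⁺ + b P⁻` on `L²(𝕋)`. -/
def pairedS (a b : Linf) : L2 →L[ℂ] L2 :=
  (Mult a).comp Pplus + (Mult b).comp Pminus

/-- The transposed paired operator `Σ_{a,b} = P⁺ a + P⁻ b` on `L²(𝕋)`. -/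
def pairedSigma (a b : Linf) : L2 →L[ℂ] L2 :=
  Pplus.comp (Mult a) + Pminus.comp (Mult b)

/-- Membership in `H^∞`: an `L^∞` function whose negative Fourier coefficients vanish. -/
def MemHinf (a : Linf) : Prop := ∀ n : ℤ, n < 0 → fourierCoeff (a : AddCircle (2 * π) → ℂ) n = 0

/-- A pair `{a,b}` is nondegenerate if `a`, `b` and `a - b` are all nonzero a.e. on `𝕋`. -/
def Nondegenerate (a b : Linf) : Prop :=
  (∀ᵐ x ∂μT, a x ≠ 0) ∧ (∀ᵐ x ∂μT, b x ≠ 0) ∧ (∀ᵐ x ∂μT, a x - b x ≠ 0)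




-- ===== auxiliary lemmas =====

instance : IsProbabilityMeasure μT := by
  unfold μT; infer_instance

lemma memHardy_iff (f : L2) : f ∈ Hardy ↔ ∀ n : ℤ, n < 0 → fourierBasis.repr f n = 0 :=
  Iff.rfl

/-- The monomial `fourier n` as an element of `L^∞`. -/
def eInf (n : ℤ) : Linf :=
  MemLp.toLp (fun x => fourier n x)
    (memLp_top_of_bound ((map_continuous (fourier n)).aestronglyMeasurable) 1
      (Filter.Eventually.of_forall fun x => by
        simp only [fourier_apply, Circle.norm_coe, le_refl]))

lemma eInf_coe (n : ℤ) :
    (eInf n : AddCircle (2 * π) → ℂ) =ᵐ[μT] fun x => fourier n x :=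
  MemLp.coeFn_toLp _

lemma eInf_abs (n : ℤ) : ∀ᵐ x ∂μT, ‖(eInf n : AddCircle (2 * π) → ℂ) x‖ = 1 := by
  filter_upwards [eInf_coe n] with x hx
  rw [hx, fourier_apply, Circle.norm_coe]

/-- Multiplication by a fourier monomial preserves L² norm. -/
lemma norm_mul2_eInf (n : ℤ) (f : L2) : ‖mul2 (eInf n) f‖ = ‖f‖ := by
  rw [mul2, Lp.norm_toLp, Lp.norm_def]
  congr 1
  apply eLpNorm_congr_norm_ae
  filter_upwards [eInf_abs n] with x hx
  simp [Pi.smul_apply, norm_mul, hx]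

/-- Fourier coefficients shift under multiplication by a monomial. -/
lemma repr_mul2_eInf (n : ℤ) (f : L2) (m : ℤ) :
    fourierBasis.repr (mul2 (eInf n) f) m = fourierBasis.repr f (m - n) := by
  rw [fourierBasis_repr, fourierBasis_repr, fourierCoeff, fourierCoeff]
  apply integral_congr_ae
  filter_upwards [mul2_coe (eInf n) f, eInf_coe n] with x h1 h2
  rw [h1, h2, smul_eq_mul, smul_eq_mul, ← mul_assoc, ← fourier_add]
  congr 2
  ring

lemma pplus_of_mem {f : L2} (hf : f ∈ Hardy) : Pplus f = f := by
  simp only [Pplus, ContinuousLinearMap.coe_comp', Function.comp_apply,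
    Submodule.subtypeL_apply]
  exact Hardy.starProjection_eq_self_iff.mpr hf

lemma pplus_of_orth {f : L2} (hf : ∀ n : ℤ, 0 ≤ n → fourierBasis.repr f n = 0) :
    Pplus f = 0 := by
  simp only [Pplus, ContinuousLinearMap.coe_comp', Function.comp_apply,
    Submodule.subtypeL_apply]
  have hmem : f ∈ Hardyᗮ := by
    rw [Submodule.mem_orthogonal]
    intro h hh
    have hsum := HilbertBasis.hasSum_inner_mul_inner fourierBasis h f
    have hz : ∀ i : ℤ, (inner ℂ h (fourierBasis i) * inner ℂ (fourierBasis i) f : ℂ) = 0 := by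
      intro i
      rcases lt_or_ge i 0 with hi | hi
      · have h0 : fourierBasis.repr h i = 0 := hh i hi
        rw [fourierBasis.repr_apply_apply] at h0
        rw [← inner_conj_symm, h0, map_zero, zero_mul]
      · have h0 : fourierBasis.repr f i = 0 := hf i hi
        rw [fourierBasis.repr_apply_apply] at h0
        rw [h0, mul_zero]
    simp only [hz] at hsum
    simpa using hsum.unique hasSum_zero
  rw [Submodule.orthogonalProjectionOnto_eq_zero_iff.mpr hmem, Submodule.coe_zero]

lemma mul2_comm_norm (a : Linf) (n : ℤ) (f : L2) :
    ‖mul2 a (mul2 (eInf n) f)‖ = ‖mul2 a f‖ := by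
  rw [Lp.norm_def, Lp.norm_def]
  congr 1
  apply eLpNorm_congr_norm_ae
  filter_upwards [mul2_coe a (mul2 (eInf n) f), mul2_coe a f, mul2_coe (eInf n) f,
    eInf_abs n] with x h1 h2 h3 h4
  rw [h1, h2, h3, norm_mul, norm_mul, norm_mul, h4]
  ring

/-- Lower bound for the operator norm of multiplication. -/
lemma norm_le_of_mul2_le (a : Linf) (c : ℝ) (hc : 0 ≤ c)
    (h : ∀ f : L2, ‖mul2 a f‖ ≤ c * ‖f‖) : ‖a‖ ≤ c := by
  by_contra hlt
  push_neg at hlt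
  set c' := (c + ‖a‖) / 2 with hc'def
  have hcc' : c < c' := by rw [hc'def]; linarith
  have hc'a : c' < ‖a‖ := by rw [hc'def]; linarith
  have hc'0 : 0 ≤ c' := by linarith
  set E := {x : AddCircle (2 * π) | c' < ‖(a : AddCircle (2 * π) → ℂ) x‖} with hEdef
  have hmeas : MeasurableSet E := by
    have hm : Measurable fun x => ‖(a : AddCircle (2 * π) → ℂ) x‖ :=
      (Lp.stronglyMeasurable a).measurable.norm
    exact measurableSet_lt measurable_const hm
  have hpos : μT E ≠ 0 := by
    intro h0
    have hae : ∀ᵐ x ∂μT, ‖(a : AddCircle (2 * π) → ℂ) x‖ ≤ c' := by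
      rw [ae_iff]
      convert h0 using 2
      ext x
      simp [hEdef]
    have hb := Lp.norm_le_of_ae_bound hc'0 hae
    simp only [ENNReal.toReal_top, inv_zero] at hb
    norm_num at hb
    linarith
  have hfin : μT E ≠ ⊤ := (measure_lt_top μT E).ne
  set f : L2 := indicatorConstLp 2 hmeas hfin (1 : ℂ) with hfdef
  have hnf : ‖f‖ = ((μT E).toReal) ^ (1 / (2:ℝ)) := by
    rw [hfdef, norm_indicatorConstLp (by norm_num) (by norm_num)]
    norm_num
    rfl
  have hfpos : 0 < ‖f‖ := by
    rw [hnf]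
    have : 0 < (μT E).toReal := ENNReal.toReal_pos hpos hfin
    positivity
  have hlow : c' * ‖f‖ ≤ ‖mul2 a f‖ := by
    have hmono : eLpNorm (E.indicator fun _ => (c' : ℂ)) 2 μT
        ≤ eLpNorm (mul2 a f : AddCircle (2 * π) → ℂ) 2 μT := by
      apply eLpNorm_mono_ae
      filter_upwards [mul2_coe a f, indicatorConstLp_coeFn (μ := μT) (p := 2)
        (hs := hmeas) (hμs := hfin) (c := (1:ℂ))] with x h1 h2
      rw [h1, h2]
      by_cases hx : x ∈ E
      · have hx' : c' < ‖(a : AddCircle (2 * π) → ℂ) x‖ := hx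
        rw [Set.indicator_of_mem hx, Set.indicator_of_mem hx, mul_one,
          Complex.norm_real, Real.norm_eq_abs, _root_.abs_of_nonneg hc'0]
        exact hx'.le
      · simp [Set.indicator_of_notMem hx]
    have hval : eLpNorm (E.indicator fun _ => (c' : ℂ)) 2 μT
        = (‖(c' : ℂ)‖₊ : ℝ≥0∞) * μT E ^ (1 / (2:ℝ)) := by
      rw [eLpNorm_indicator_const hmeas (by norm_num) (by norm_num), enorm_eq_nnnorm]
      norm_num
    have hmono' := ENNReal.toReal_mono (Lp.memLp (mul2 a f)).2.ne hmono
    rw [hval, ENNReal.toReal_mul, ← ENNReal.toReal_rpow, ENNReal.coe_toReal] at hmono'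
    have henorm : (‖(c' : ℂ)‖₊ : ℝ) = c' := by
      simp [_root_.abs_of_nonneg hc'0]
    rw [henorm] at hmono'
    calc c' * ‖f‖ = c' * (μT E).toReal ^ (1 / (2:ℝ)) := by rw [hnf]
      _ ≤ (eLpNorm (mul2 a f : AddCircle (2 * π) → ℂ) 2 μT).toReal := hmono'
      _ = ‖mul2 a f‖ := (Lp.norm_def _).symm
  have := h f
  nlinarith

lemma span_bound (g : L2) (hg : g ∈ Submodule.span ℂ (Set.range (fourierBasis (T := 2*π)))) :
    ∃ N : ℕ, ∀ m : ℤ, (N : ℤ) < |m| → fourierBasis.repr g m = 0 := by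
  induction hg using Submodule.span_induction with
  | mem x hx =>
    obtain ⟨k, rfl⟩ := hx
    refine ⟨k.natAbs, fun m hm => ?_⟩
    rw [fourierBasis.repr_self]
    have hne : m ≠ k := by
      intro hmk
      rw [hmk, Int.abs_eq_natAbs] at hm
      omega
    classical
    rw [lp.single_apply]
    simp [hne]
  | zero => exact ⟨0, fun m _ => by simp⟩
  | add x y _ _ hx hy =>
    obtain ⟨N1, h1⟩ := hx
    obtain ⟨N2, h2⟩ := hy
    refine ⟨max N1 N2, fun m hm => ?_⟩
    push_cast at hm
    rw [map_add]
    have e1 := h1 m (lt_of_le_of_lt (le_max_left _ _) hm)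
    have e2 := h2 m (lt_of_le_of_lt (le_max_right _ _) hm)
    simp only [lp.coeFn_add, Pi.add_apply] at *
    rw [e1, e2, add_zero]
  | smul c x _ hx =>
    obtain ⟨N, hN⟩ := hx
    refine ⟨N, fun m hm => ?_⟩
    rw [_root_.map_smul]
    simp only [lp.coeFn_smul, Pi.smul_apply, hN m hm, smul_zero]

lemma mul2_le_S_a (a b : Linf) (f : L2) : ‖mul2 a f‖ ≤ ‖pairedS a b‖ * ‖f‖ := by
  have key : ∀ g ∈ Submodule.span ℂ (Set.range (fourierBasis (T := 2 * π))),
      ‖mul2 a g‖ ≤ ‖pairedS a b‖ * ‖g‖ := by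
    intro g hg
    obtain ⟨N, hN⟩ := span_bound g hg
    set gs : L2 := mul2 (eInf ((N : ℤ) + 1)) g with hgs
    have hmem : gs ∈ Hardy := by
      intro m hm
      rw [hgs, repr_mul2_eInf]
      apply hN
      have h1 : m - ((N : ℤ) + 1) < 0 := by omega
      have h2 : -(m - ((N : ℤ) + 1)) ≤ |m - ((N : ℤ) + 1)| := neg_le_abs _
      omega
    have hS : pairedS a b gs = mul2 a gs := by
      have hp : Pplus gs = gs := pplus_of_mem hmem
      have hm : Pminus gs = 0 := by
        simp [Pminus, ContinuousLinearMap.sub_apply, hp]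
      simp [pairedS, ContinuousLinearMap.add_apply, ContinuousLinearMap.comp_apply, hp, hm]
      rfl
    calc ‖mul2 a g‖ = ‖mul2 a gs‖ := (mul2_comm_norm a _ g).symm
      _ = ‖pairedS a b gs‖ := by rw [hS]
      _ ≤ ‖pairedS a b‖ * ‖gs‖ := (pairedS a b).le_opNorm gs
      _ = ‖pairedS a b‖ * ‖g‖ := by rw [hgs, norm_mul2_eInf]
  have hC : IsClosed {g : L2 | ‖mul2 a g‖ ≤ ‖pairedS a b‖ * ‖g‖} := by
    apply isClosed_le
    · exact ((Mult a).continuous.norm)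
    · exact continuous_const.mul continuous_norm
  have hsub : (Submodule.span ℂ (Set.range (fourierBasis (T := 2 * π))) : Set L2)
      ⊆ {g : L2 | ‖mul2 a g‖ ≤ ‖pairedS a b‖ * ‖g‖} := fun g hg => key g hg
  have hclo := hC.closure_subset_iff.mpr hsub
  refine hclo ?_
  rw [← Submodule.topologicalClosure_coe, (fourierBasis (T := 2 * π)).dense_span]
  trivial

lemma mul2_le_S_b (a b : Linf) (f : L2) : ‖mul2 b f‖ ≤ ‖pairedS a b‖ * ‖f‖ := by
  have key : ∀ g ∈ Submodule.span ℂ (Set.range (fourierBasis (T := 2 * π))),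
      ‖mul2 b g‖ ≤ ‖pairedS a b‖ * ‖g‖ := by
    intro g hg
    obtain ⟨N, hN⟩ := span_bound g hg
    set gs : L2 := mul2 (eInf (-((N : ℤ) + 1))) g with hgs
    have horth : ∀ m : ℤ, 0 ≤ m → fourierBasis.repr gs m = 0 := by
      intro m hm
      rw [hgs, repr_mul2_eInf]
      apply hN
      have h1 : 0 < m - (-((N : ℤ) + 1)) := by omega
      have h2 : m - (-((N : ℤ) + 1)) ≤ |m - (-((N : ℤ) + 1))| := le_abs_self _
      omega
    have hS : pairedS a b gs = mul2 b gs := by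
      have hp : Pplus gs = 0 := pplus_of_orth horth
      have hm : Pminus gs = gs := by
        simp [Pminus, ContinuousLinearMap.sub_apply, hp]
      simp [pairedS, ContinuousLinearMap.add_apply, ContinuousLinearMap.comp_apply, hp, hm]
      rfl
    calc ‖mul2 b g‖ = ‖mul2 b gs‖ := (mul2_comm_norm b _ g).symm
      _ = ‖pairedS a b gs‖ := by rw [hS]
      _ ≤ ‖pairedS a b‖ * ‖gs‖ := (pairedS a b).le_opNorm gs
      _ = ‖pairedS a b‖ * ‖g‖ := by rw [hgs, norm_mul2_eInf]
  have hC : IsClosed {g : L2 | ‖mul2 b g‖ ≤ ‖pairedS a b‖ * ‖g‖} := by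
    apply isClosed_le
    · exact ((Mult b).continuous.norm)
    · exact continuous_const.mul continuous_norm
  have hsub : (Submodule.span ℂ (Set.range (fourierBasis (T := 2 * π))) : Set L2)
      ⊆ {g : L2 | ‖mul2 b g‖ ≤ ‖pairedS a b‖ * ‖g‖} := fun g hg => key g hg
  have hclo := hC.closure_subset_iff.mpr hsub
  refine hclo ?_
  rw [← Submodule.topologicalClosure_coe, (fourierBasis (T := 2 * π)).dense_span]
  trivial

lemma pplus_mem (f : L2) : Pplus f ∈ Hardy := by
  simp only [Pplus, ContinuousLinearMap.coe_comp', Function.comp_apply,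
    Submodule.subtypeL_apply]
  exact (Hardy.orthogonalProjectionOnto f).2

lemma pminus_mem_orth (f : L2) : Pminus f ∈ Hardyᗮ := by
  simp only [Pminus, Pplus, ContinuousLinearMap.coe_sub', Pi.sub_apply,
    ContinuousLinearMap.coe_id', id_eq, ContinuousLinearMap.coe_comp',
    Function.comp_apply, Submodule.subtypeL_apply]
  exact Hardy.sub_starProjection_mem_orthogonal f

lemma norm_sq_split (f : L2) : ‖Pplus f‖ ^ 2 + ‖Pminus f‖ ^ 2 = ‖f‖ ^ 2 := by
  have hsum : Pplus f + Pminus f = f := by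
    simp [Pminus]
  have hinner : (inner ℂ (Pplus f) (Pminus f) : ℂ) = 0 :=
    (Submodule.mem_orthogonal _ _).mp (pminus_mem_orth f) _ (pplus_mem f)
  conv_rhs => rw [← hsum]
  have := (norm_add_sq_eq_norm_sq_add_norm_sq_of_inner_eq_zero _ _ hinner).symm
  nlinarith [this]

/-- `max(‖a‖_∞, ‖b‖_∞) ≤ ‖S_{a,b}‖ ≤ √2 · max(‖a‖_∞, ‖b‖_∞)`. -/
theorem statement2 (a b : Linf) :
    max ‖a‖ ‖b‖ ≤ ‖pairedS a b‖ ∧ ‖pairedS a b‖ ≤ Real.sqrt 2 * max ‖a‖ ‖b‖ := by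
  constructor
  · apply max_le
    · exact norm_le_of_mul2_le a ‖pairedS a b‖ (norm_nonneg _) (mul2_le_S_a a b)
    · exact norm_le_of_mul2_le b ‖pairedS a b‖ (norm_nonneg _) (mul2_le_S_b a b)
  · set M := max ‖a‖ ‖b‖ with hM
    have hM0 : 0 ≤ M := le_trans (norm_nonneg a) (le_max_left _ _)
    apply ContinuousLinearMap.opNorm_le_bound _ (by positivity)
    intro f
    have h1 : ‖pairedS a b f‖ ≤ ‖a‖ * ‖Pplus f‖ + ‖b‖ * ‖Pminus f‖ := by
      calc ‖pairedS a b f‖ ≤ ‖Mult a (Pplus f)‖ + ‖Mult b (Pminus f)‖ := by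
            rw [pairedS]
            exact norm_add_le _ _
        _ ≤ ‖a‖ * ‖Pplus f‖ + ‖b‖ * ‖Pminus f‖ :=
            add_le_add (mul2_norm_le a _) (mul2_norm_le b _)
    have h2 : ‖a‖ * ‖Pplus f‖ + ‖b‖ * ‖Pminus f‖ ≤ M * (‖Pplus f‖ + ‖Pminus f‖) := by
      have := le_max_left ‖a‖ ‖b‖
      have := le_max_right ‖a‖ ‖b‖
      have := norm_nonneg (Pplus f)
      have := norm_nonneg (Pminus f)
      nlinarith
    have h3 : ‖Pplus f‖ + ‖Pminus f‖ ≤ Real.sqrt 2 * ‖f‖ := by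
      have hsplit := norm_sq_split f
      have hx := norm_nonneg (Pplus f)
      have hy := norm_nonneg (Pminus f)
      have hf := norm_nonneg f
      have hsq : (‖Pplus f‖ + ‖Pminus f‖) ^ 2 ≤ (Real.sqrt 2 * ‖f‖) ^ 2 := by
        rw [mul_pow, Real.sq_sqrt (by norm_num : (0:ℝ) ≤ 2)]
        nlinarith [sq_nonneg (‖Pplus f‖ - ‖Pminus f‖)]
      have hs2 : (0:ℝ) ≤ Real.sqrt 2 * ‖f‖ := by positivity
      nlinarith
    calc ‖pairedS a b f‖ ≤ M * (‖Pplus f‖ + ‖Pminus f‖) := le_trans h1 h2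
      _ ≤ M * (Real.sqrt 2 * ‖f‖) := by nlinarith
      _ = Real.sqrt 2 * M * ‖f‖ := by ring

end
end

section
/- For a, ã, b, b̃ ∈ L^∞(T) with {a,b}, {ã,b̃} nondegenerate, S_{a,b} and S_{ã,b̃} commute if and only if (a−b)(P^- M_ã P^+ − P^+ M_b̃ P^-) = (ã−b̃)(P^- M_a P^+ − P^+ M_b P^-) as operators on L^2(T). -/
open MeasureTheory Complex Real AddCircle
open scoped ENNReal ComplexConjugate

noncomputable section

lemma Mult_apply (a : Linf) (f : L2) : Mult a f = mul2 a f := rfl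

lemma Mult_comm' (a b : Linf) : Mult a * Mult b = Mult b * Mult a := by
  ext1 f
  refine Lp.ext ?_
  have h1 := mul2_coe a (mul2 b f)
  have h2 := mul2_coe b f
  have h3 := mul2_coe b (mul2 a f)
  have h4 := mul2_coe a f
  filter_upwards [h1, h2, h3, h4] with x e1 e2 e3 e4
  show (mul2 a (mul2 b f) : AddCircle (2 * π) → ℂ) x
      = (mul2 b (mul2 a f) : AddCircle (2 * π) → ℂ) x
  rw [e1, e3]
  simp only [e2, e4]
  ring

lemma Mult_sub (a b : Linf) : Mult (a - b) = Mult a - Mult b := by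
  ext1 f
  rw [ContinuousLinearMap.sub_apply, Mult_apply, Mult_apply, Mult_apply]
  refine Lp.ext ?_
  filter_upwards [mul2_coe (a - b) f, mul2_coe a f, mul2_coe b f,
    Lp.coeFn_sub a b, Lp.coeFn_sub (mul2 a f) (mul2 b f)] with x e1 e2 e3 e4 e5
  rw [e1, e5]
  simp only [Pi.sub_apply, e2, e3, e4]
  ring

lemma key_ring {R : Type*} [Ring R] (P A B A' B' : R) :
    (A * P + B * (1 - P)) * (A' * P + B' * (1 - P))
      = A * A' * P + B * B' * (1 - P)
        - (A - B) * ((1 - P) * (A' * P) - P * (B' * (1 - P))) := by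
  noncomm_ring

/-- `S_{a,b}` and `S_{ã,b̃}` commute iff
`(a−b)(P⁻ M_ã P⁺ − P⁺ M_b̃ P⁻) = (ã−b̃)(P⁻ M_a P⁺ − P⁺ M_b P⁻)`. -/
theorem statement7 (a b ta tb : Linf)
    (h1 : Nondegenerate a b) (h2 : Nondegenerate ta tb) :
    (pairedS a b).comp (pairedS ta tb) = (pairedS ta tb).comp (pairedS a b)
      ↔ (Mult (a - b)).comp
            (Pminus.comp ((Mult ta).comp Pplus) - Pplus.comp ((Mult tb).comp Pminus))
        = (Mult (ta - tb)).comp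
            (Pminus.comp ((Mult a).comp Pplus) - Pplus.comp ((Mult b).comp Pminus)) := by
  have hS : ∀ u v : Linf, pairedS u v = Mult u * Pplus + Mult v * (1 - Pplus) := fun u v => rfl
  have hgoal : (Mult (a - b)).comp
        (Pminus.comp ((Mult ta).comp Pplus) - Pplus.comp ((Mult tb).comp Pminus))
      = (Mult a - Mult b) *
        ((1 - Pplus) * (Mult ta * Pplus) - Pplus * (Mult tb * (1 - Pplus))) := by
    rw [Mult_sub]; rfl
  have hgoal' : (Mult (ta - tb)).comp
        (Pminus.comp ((Mult a).comp Pplus) - Pplus.comp ((Mult b).comp Pminus))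
      = (Mult ta - Mult tb) *
        ((1 - Pplus) * (Mult a * Pplus) - Pplus * (Mult b * (1 - Pplus))) := by
    rw [Mult_sub]; rfl
  have hcomp : (pairedS a b).comp (pairedS ta tb) = pairedS a b * pairedS ta tb := rfl
  have hcomp' : (pairedS ta tb).comp (pairedS a b) = pairedS ta tb * pairedS a b := rfl
  rw [hcomp, hcomp', hgoal, hgoal', hS, hS,
    key_ring Pplus (Mult a) (Mult b) (Mult ta) (Mult tb),
    key_ring Pplus (Mult ta) (Mult tb) (Mult a) (Mult b),
    Mult_comm' a ta, Mult_comm' b tb]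
  exact sub_right_inj

end
end
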